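/- The Borda count does not prevent social disappointment: there exists a preference profile (for example, for 3 alternatives a, b, c and 4 voters, where voters 1 and 2 have list (a, b, c) and voters 3 and 4 have list (c, b, a)) in which some alternative that is a Borda winner is ranked last by at least half of the voters. -/

import Mathlib

open Finset

attribute [local instance] Classical.propDecidable

noncomputable section

/-- A preference profile for `n` voters: each voter has a ballot, a list of
alternatives ordered from most preferred (head) to least preferred (last). -/
abbrev Profile (n : ℕ) (A : Type*) := Fin n → List A

variable {A : Type*} [DecidableEq A]

/-- A valid profile: every ballot is a strict linear order on the alternatives,
i.e. a duplicate-free list containing every alternative. -/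
def IsProfile {n : ℕ} (P : Profile n A) : Prop :=
  ∀ i, (P i).Nodup ∧ ∀ a : A, a ∈ P i

/-- The voter with ballot `l` prefers `x` to `y`. -/
def Prefers (l : List A) (x y : A) : Prop := l.idxOf x < l.idxOf y

/-- The number of voters who rank `a` last (at the bottom of their list). -/
def lastCount {n : ℕ} (P : Profile n A) (a : A) : ℕ :=
  (univ.filter fun i => (P i).getLast? = some a).card

/-- The number of voters who rank `a` first (at the top of their list). -/
def firstCount {n : ℕ} (P : Profile n A) (a : A) : ℕ :=
  (univ.filter fun i => (P i).head? = some a).card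

/-- The number of voters preferring `x` to `y`. -/
def prefCount {n : ℕ} (P : Profile n A) (x y : A) : ℕ :=
  (univ.filter fun i => Prefers (P i) x y).card

/-- `x` defeats `y` in a pairwise majority contest: strictly more voters
prefer `x` to `y` than prefer `y` to `x`. -/
def Defeats {n : ℕ} (P : Profile n A) (x y : A) : Prop :=
  prefCount P y x < prefCount P x y

/-- Condorcet's method: the winners are the alternatives defeated by no other alternative. -/
def CondorcetWinners {n : ℕ} (P : Profile n A) : Set A :=
  {a | ∀ b, ¬ Defeats P b a}

/-- `a` is a Condorcet winner: it is the unique winner of Condorcet's method. -/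
def IsCondorcetWinner {n : ℕ} (P : Profile n A) (a : A) : Prop :=
  CondorcetWinners P = {a}

/-- Borda score of `a`: from each voter, `a` receives one point for every
alternative ranked strictly below it on that voter's list. -/
def bordaScore {n : ℕ} [Fintype A] (P : Profile n A) (a : A) : ℕ :=
  ∑ i : Fin n, (univ.filter fun x => Prefers (P i) a x).card

/-- Borda count: the winners are the alternative(s) with maximal total Borda score. -/
def BordaWinners {n : ℕ} [Fintype A] (P : Profile n A) : Set A :=
  {a | ∀ b, bordaScore P b ≤ bordaScore P a}

/-- The Borda count does not prevent social disappointment: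
there is a profile (3 alternatives, 4 voters) in which some Borda winner
is ranked last by at least half of the voters. -/
theorem borda_not_nonSD :
    ∃ P : Profile 4 (Fin 3), IsProfile P ∧
      ∃ a ∈ BordaWinners P, 4 ≤ 2 * lastCount P a := by
  refine ⟨fun i => if i.val < 2 then [0, 1, 2] else [2, 1, 0], ?_, 0, ?_, ?_⟩
  · intro i
    by_cases h : i.val < 2 <;> simp [h] <;> decide
  · intro b
    unfold bordaScore
    rw [Fin.sum_univ_four, Fin.sum_univ_four]
    norm_num [Prefers, Finset.filter, Finset.card]
    fin_cases b <;> decide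
  · unfold lastCount
    norm_num [Finset.filter, Finset.card]
    decide
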